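/- Let τ ∈ (0,1) with τ ≠ 1/2, and let μ₁, μ₂ ∈ ℝ with Δ = |μ₁ − μ₂|. Then ∫_ℝ τ(1−τ) exp( −½ ρ_τ(y − μ₁) − ½ ρ_τ(y − μ₂) ) dy = (1−τ)/(1−2τ) · exp(−Δτ/2) − τ/(1−2τ) · exp(−Δ(1−τ)/2). Equivalently, the Hellinger affinity ∫ √(ald(y;μ₁) · ald(y;μ₂)) dy between two asymmetric Laplace densities with scale 1 and common skewness τ equals this expression, so the squared Hellinger distance between them equals 2 − 2[(1−τ)e^{−Δτ/2} − τ e^{−Δ(1−τ)/2}]/(1−2τ). -/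

import Mathlib

open MeasureTheory ProbabilityTheory Real Filter
open scoped ENNReal Topology NNReal

noncomputable section

/-- Check (quantile-loss) function `ρ_τ(u) = u (τ − 1_{u<0})`. -/
def checkFun (τ u : ℝ) : ℝ := u * (τ - if u < 0 then 1 else 0)

/-- Asymmetric Laplace density with location `μ`, scale `1`, skewness `τ`. -/
def ald (τ y μ : ℝ) : ℝ := τ * (1 - τ) * Real.exp (-(checkFun τ (y - μ)))

lemma checkFun_eq (τ u : ℝ) : checkFun τ u = τ * u - min u 0 := by
  unfold checkFun
  rcases lt_or_ge u 0 with h | h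
  · rw [if_pos h, min_eq_left h.le]; ring
  · rw [if_neg (not_lt.2 h), min_eq_right h]; ring

lemma checkFun_of_nonneg {u : ℝ} (τ : ℝ) (h : 0 ≤ u) : checkFun τ u = τ * u := by
  rw [checkFun_eq, min_eq_right h, sub_zero]

lemma checkFun_of_nonpos {u : ℝ} (τ : ℝ) (h : u ≤ 0) : checkFun τ u = (τ - 1) * u := by
  rw [checkFun_eq, min_eq_left h]; ring

lemma integral_exp_neg_mul_Ioi {c : ℝ} (hc : 0 < c) (a : ℝ) :
    ∫ y in Set.Ioi a, Real.exp (-(c * y)) = Real.exp (-(c * a)) / c := by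
  have h := MeasureTheory.integral_comp_mul_left_Ioi (fun u => Real.exp (-u)) a hc
  rw [integral_exp_neg_Ioi, smul_eq_mul] at h
  rw [h, div_eq_inv_mul]

lemma integral_exp_mul_Iic' {c : ℝ} (hc : 0 < c) (a : ℝ) :
    ∫ y in Set.Iic a, Real.exp (c * y) = Real.exp (c * a) / c := by
  have h := integral_comp_neg_Iic a (fun x : ℝ => Real.exp (-(c * x)))
  simp only [mul_neg, neg_neg] at h
  rw [h, integral_exp_neg_mul_Ioi hc, mul_neg, neg_neg]

lemma integrableOn_exp_mul_Iic' {c : ℝ} (hc : 0 < c) (a : ℝ) :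
    IntegrableOn (fun y : ℝ => Real.exp (c * y)) (Set.Iic a) := by
  refine integrableOn_Iic_of_intervalIntegral_norm_bounded (Real.exp (c * a) / c) a
    (fun i => ((Real.continuous_exp.comp (continuous_const.mul continuous_id)).integrableOn_Ioc))
    tendsto_id (Filter.Eventually.of_forall fun y => ?_)
  have h1 : ∀ x : ℝ, ‖Real.exp (c * x)‖ = Real.exp (c * x) := fun x =>
    Real.norm_of_nonneg (Real.exp_nonneg _)
  simp_rw [h1]
  rw [intervalIntegral.integral_comp_mul_left (fun x => Real.exp x) hc.ne', smul_eq_mul,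
    integral_exp, div_eq_inv_mul]
  apply mul_le_mul_of_nonneg_left _ (inv_nonneg.2 hc.le)
  have := (Real.exp_pos (c * (id y))).le
  linarith

lemma aux_main (τ : ℝ) (hτ0 : 0 < τ) (hτ1 : τ < 1) (hτ2 : τ ≠ 1 / 2) (a b : ℝ) (hab : a ≤ b) :
    (Integrable (fun y : ℝ =>
        Real.exp (-(1 / 2) * checkFun τ (y - a) - (1 / 2) * checkFun τ (y - b)))) ∧
    τ * (1 - τ) * ∫ y : ℝ,
        Real.exp (-(1 / 2) * checkFun τ (y - a) - (1 / 2) * checkFun τ (y - b))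
      = (1 - τ) / (1 - 2 * τ) * Real.exp (-((b - a) * τ / 2))
        - τ / (1 - 2 * τ) * Real.exp (-((b - a) * (1 - τ) / 2)) := by
  have hτ1' : 0 < 1 - τ := by linarith
  have h2τ : 1 - 2 * τ ≠ 0 := fun h => hτ2 (by linarith)
  have hk : (1 - 2 * τ) / 2 ≠ 0 := by
    intro h; exact h2τ (by linarith [h])
  set g := fun y : ℝ =>
      Real.exp (-(1 / 2) * checkFun τ (y - a) - (1 / 2) * checkFun τ (y - b)) with hg
  have e1 : Set.EqOn g
      (fun y => Real.exp (-((1 - τ) * (a + b) / 2)) * Real.exp ((1 - τ) * y)) (Set.Iic a) := by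
    intro y hy
    have h1 : y - a ≤ 0 := by simpa using sub_nonpos.2 (Set.mem_Iic.mp hy)
    have h2 : y - b ≤ 0 := by have := Set.mem_Iic.mp hy; simpa using sub_nonpos.2 (this.trans hab)
    simp only [hg, checkFun_of_nonpos τ h1, checkFun_of_nonpos τ h2, ← Real.exp_add]
    congr 1; ring
  have e2 : Set.EqOn g
      (fun y => Real.exp ((τ * a - (1 - τ) * b) / 2) * Real.exp ((1 - 2 * τ) / 2 * y))
      (Set.Ioc a b) := by
    intro y hy
    have h1 : 0 ≤ y - a := sub_nonneg.2 hy.1.le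
    have h2 : y - b ≤ 0 := sub_nonpos.2 hy.2
    simp only [hg, checkFun_of_nonneg τ h1, checkFun_of_nonpos τ h2, ← Real.exp_add]
    congr 1; ring
  have e3 : Set.EqOn g
      (fun y => Real.exp (τ * (a + b) / 2) * Real.exp (-(τ * y))) (Set.Ioi b) := by
    intro y hy
    have h1 : 0 ≤ y - a := sub_nonneg.2 ((hab.trans (Set.mem_Ioi.mp hy).le))
    have h2 : 0 ≤ y - b := sub_nonneg.2 (Set.mem_Ioi.mp hy).le
    simp only [hg, checkFun_of_nonneg τ h1, checkFun_of_nonneg τ h2, ← Real.exp_add]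
    congr 1; ring
  have hgc : Continuous g := by
    simp only [hg, checkFun_eq]
    fun_prop
  have hi1 : IntegrableOn g (Set.Iic a) :=
    IntegrableOn.congr_fun ((integrableOn_exp_mul_Iic' hτ1' a).const_mul _) e1.symm
      measurableSet_Iic
  have hi2 : IntegrableOn g (Set.Ioc a b) := hgc.integrableOn_Ioc
  have hi3 : IntegrableOn g (Set.Ioi b) := by
    have h0 : IntegrableOn (fun y : ℝ => Real.exp (-(τ * y))) (Set.Ioi b) := by
      simpa [neg_mul] using exp_neg_integrableOn_Ioi b hτ0
    exact IntegrableOn.congr_fun (h0.const_mul _) e3.symm measurableSet_Ioi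
  have hiIoi : IntegrableOn g (Set.Ioi a) := by
    rw [← Set.Ioc_union_Ioi_eq_Ioi hab]; exact hi2.union hi3
  have hint : Integrable g := by
    rw [← integrableOn_univ, ← Set.Iic_union_Ioi (a := a)]
    exact hi1.union hiIoi
  refine ⟨hint, ?_⟩
  have hsplit : ∫ y : ℝ, g y = (∫ y in Set.Iic a, g y) + ((∫ y in Set.Ioc a b, g y)
      + (∫ y in Set.Ioi b, g y)) := by
    rw [← intervalIntegral.integral_Iic_add_Ioi hi1 hiIoi]
    congr 1
    rw [← Set.Ioc_union_Ioi_eq_Ioi hab,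
      setIntegral_union ((Set.Iic_disjoint_Ioi le_rfl).mono_left Set.Ioc_subset_Iic_self)
        measurableSet_Ioi hi2 hi3]
  have v1 : ∫ y in Set.Iic a, g y = Real.exp (-((b - a) * (1 - τ) / 2)) / (1 - τ) := by
    rw [setIntegral_congr_fun measurableSet_Iic e1, integral_const_mul,
      integral_exp_mul_Iic' hτ1', ← mul_div_assoc, ← Real.exp_add]
    congr 2; ring
  have v3 : ∫ y in Set.Ioi b, g y = Real.exp (-((b - a) * τ / 2)) / τ := by
    rw [setIntegral_congr_fun measurableSet_Ioi e3, integral_const_mul,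
      integral_exp_neg_mul_Ioi hτ0, ← mul_div_assoc, ← Real.exp_add]
    congr 2; ring
  have v2 : ∫ y in Set.Ioc a b, g y =
      (Real.exp (-((b - a) * τ / 2)) - Real.exp (-((b - a) * (1 - τ) / 2))) * 2 / (1 - 2 * τ) := by
    rw [setIntegral_congr_fun measurableSet_Ioc e2, ← intervalIntegral.integral_of_le hab,
      intervalIntegral.integral_const_mul,
      intervalIntegral.integral_comp_mul_left (fun x => Real.exp x) hk, smul_eq_mul,
      integral_exp]
    rw [mul_comm ((1 - 2 * τ) / 2)⁻¹, ← mul_assoc, mul_sub, ← Real.exp_add, ← Real.exp_add]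
    rw [show (τ * a - (1 - τ) * b) / 2 + (1 - 2 * τ) / 2 * b = -((b - a) * τ / 2) by ring,
      show (τ * a - (1 - τ) * b) / 2 + (1 - 2 * τ) / 2 * a = -((b - a) * (1 - τ) / 2) by ring]
    rw [inv_div, ← mul_div_assoc]
  rw [hsplit, v1, v2, v3]
  have h2τ' : (1 : ℝ) - τ * 2 ≠ 0 := by contrapose! h2τ; linarith
  field_simp [h2τ']
  ring

lemma key (τ : ℝ) (hτ : τ ∈ Set.Ioo (0 : ℝ) 1) (hτ2 : τ ≠ 1 / 2) (a b : ℝ) (hab : a ≤ b) :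
    (∫ y : ℝ, τ * (1 - τ) *
        Real.exp (-(1 / 2) * checkFun τ (y - a) - (1 / 2) * checkFun τ (y - b)))
      = (1 - τ) / (1 - 2 * τ) * Real.exp (-(|a - b| * τ / 2))
        - τ / (1 - 2 * τ) * Real.exp (-(|a - b| * (1 - τ) / 2)) ∧
    (∫ y : ℝ, (Real.sqrt (ald τ y a) - Real.sqrt (ald τ y b)) ^ 2)
      = 2 - 2 * ((1 - τ) / (1 - 2 * τ) * Real.exp (-(|a - b| * τ / 2))
        - τ / (1 - 2 * τ) * Real.exp (-(|a - b| * (1 - τ) / 2))) := by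
  obtain ⟨hτ0, hτ1⟩ := hτ
  have h2τ : 1 - 2 * τ ≠ 0 := fun h => hτ2 (by linarith)
  have hττ : (0 : ℝ) ≤ τ * (1 - τ) := mul_nonneg hτ0.le (by linarith)
  have habs : |a - b| = b - a := by rw [abs_sub_comm, abs_of_nonneg (sub_nonneg.2 hab)]
  obtain ⟨hint, hval⟩ := aux_main τ hτ0 hτ1 hτ2 a b hab
  have haff : (∫ y : ℝ, τ * (1 - τ) *
      Real.exp (-(1 / 2) * checkFun τ (y - a) - (1 / 2) * checkFun τ (y - b)))
      = (1 - τ) / (1 - 2 * τ) * Real.exp (-(|a - b| * τ / 2))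
        - τ / (1 - 2 * τ) * Real.exp (-(|a - b| * (1 - τ) / 2)) := by
    rw [integral_const_mul, habs]; exact hval
  refine ⟨haff, ?_⟩
  have hpt : ∀ y : ℝ, (Real.sqrt (ald τ y a) - Real.sqrt (ald τ y b)) ^ 2
      = ald τ y a + ald τ y b - 2 * (τ * (1 - τ) *
        Real.exp (-(1 / 2) * checkFun τ (y - a) - (1 / 2) * checkFun τ (y - b))) := by
    intro y
    have h1 : 0 ≤ ald τ y a := mul_nonneg hττ (Real.exp_pos _).le
    have h2 : 0 ≤ ald τ y b := mul_nonneg hττ (Real.exp_pos _).le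
    have hm : Real.sqrt (ald τ y a) * Real.sqrt (ald τ y b) = τ * (1 - τ) *
        Real.exp (-(1 / 2) * checkFun τ (y - a) - (1 / 2) * checkFun τ (y - b)) := by
      rw [← Real.sqrt_mul h1]
      have hsq : ald τ y a * ald τ y b = (τ * (1 - τ) *
          Real.exp (-(1 / 2) * checkFun τ (y - a) - (1 / 2) * checkFun τ (y - b))) ^ 2 := by
        unfold ald
        rw [mul_pow, pow_two (Real.exp _), ← Real.exp_add,
          show (-(1 / 2) * checkFun τ (y - a) - 1 / 2 * checkFun τ (y - b))
              + (-(1 / 2) * checkFun τ (y - a) - 1 / 2 * checkFun τ (y - b))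
            = -(checkFun τ (y - a)) + -(checkFun τ (y - b)) from by ring,
          Real.exp_add]
        ring
      rw [hsq, Real.sqrt_sq (mul_nonneg hττ (Real.exp_pos _).le)]
    rw [sub_sq, Real.sq_sqrt h1, Real.sq_sqrt h2, mul_assoc, hm]; ring
  have hcross : Integrable (fun y : ℝ => τ * (1 - τ) *
      Real.exp (-(1 / 2) * checkFun τ (y - a) - (1 / 2) * checkFun τ (y - b))) :=
    hint.const_mul _
  have ea : ∀ c : ℝ, (fun y : ℝ => ald τ y c) = fun y : ℝ => τ * (1 - τ) *
      Real.exp (-(1 / 2) * checkFun τ (y - c) - (1 / 2) * checkFun τ (y - c)) := by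
    intro c; funext y; unfold ald; congr 1; congr 1; ring
  have hald_int : ∀ c : ℝ, Integrable (fun y : ℝ => ald τ y c) := by
    intro c; rw [ea c]; exact (aux_main τ hτ0 hτ1 hτ2 c c le_rfl).1.const_mul _
  have hald_val : ∀ c : ℝ, (∫ y : ℝ, ald τ y c) = 1 := by
    intro c
    rw [ea c, integral_const_mul, (aux_main τ hτ0 hτ1 hτ2 c c le_rfl).2]
    simp only [sub_self, zero_mul, zero_div, neg_zero, Real.exp_zero, mul_one]
    rw [div_sub_div_same, div_eq_one_iff_eq h2τ]
    ring
  have hab_int : Integrable (fun y : ℝ => ald τ y a + ald τ y b) :=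
    (hald_int a).add (hald_int b)
  simp only [hpt]
  rw [integral_sub hab_int (hcross.const_mul 2),
    integral_add (hald_int a) (hald_int b), hald_val, hald_val, integral_const_mul, haff]
  ring

/-- The Hellinger affinity between two asymmetric Laplace densities with scale `1` and
common skewness `τ ≠ 1/2` located at `μ₁` and `μ₂` (with `Δ = |μ₁ − μ₂|`) equals
`(1−τ)/(1−2τ) · e^{−Δτ/2} − τ/(1−2τ) · e^{−Δ(1−τ)/2}`; equivalently the squared
Hellinger distance equals `2 − 2` times this expression. -/
theorem hellinger_affinity_ald (τ : ℝ) (hτ : τ ∈ Set.Ioo (0 : ℝ) 1) (hτ2 : τ ≠ 1 / 2)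
    (μ₁ μ₂ : ℝ) :
    (∫ y : ℝ, τ * (1 - τ) *
        Real.exp (-(1 / 2) * checkFun τ (y - μ₁) - (1 / 2) * checkFun τ (y - μ₂)))
      = (1 - τ) / (1 - 2 * τ) * Real.exp (-(|μ₁ - μ₂| * τ / 2))
        - τ / (1 - 2 * τ) * Real.exp (-(|μ₁ - μ₂| * (1 - τ) / 2)) ∧
    (∫ y : ℝ, (Real.sqrt (ald τ y μ₁) - Real.sqrt (ald τ y μ₂)) ^ 2)
      = 2 - 2 * ((1 - τ) / (1 - 2 * τ) * Real.exp (-(|μ₁ - μ₂| * τ / 2))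
        - τ / (1 - 2 * τ) * Real.exp (-(|μ₁ - μ₂| * (1 - τ) / 2))) := by
  rcases le_total μ₁ μ₂ with h | h
  · exact key τ hτ hτ2 μ₁ μ₂ h
  · obtain ⟨k1, k2⟩ := key τ hτ hτ2 μ₂ μ₁ h
    rw [abs_sub_comm μ₂ μ₁] at k1 k2
    constructor
    · rw [show (fun y : ℝ => τ * (1 - τ) *
          Real.exp (-(1 / 2) * checkFun τ (y - μ₁) - (1 / 2) * checkFun τ (y - μ₂)))
          = fun y : ℝ => τ * (1 - τ) *
          Real.exp (-(1 / 2) * checkFun τ (y - μ₂) - (1 / 2) * checkFun τ (y - μ₁)) from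
        funext fun y => by congr 1; congr 1; ring]
      exact k1
    · rw [show (fun y : ℝ => (Real.sqrt (ald τ y μ₁) - Real.sqrt (ald τ y μ₂)) ^ 2)
          = fun y : ℝ => (Real.sqrt (ald τ y μ₂) - Real.sqrt (ald τ y μ₁)) ^ 2 from
        funext fun y => by ring]
      exact k2


end
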